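/- For ν ∈ [0,1] and X ∈ B(H), the limit as ρ → 0⁺ of ρ·Δ_{ρ,ν}(X) equals 2 w(X + (1−2ν)X*), where Δ_{ρ,ν}(X) = w([[0, αX],[α(1−2ν)X*, β(X+(1−2ν)X*)]]) with α = √(8/ρ−4), β = 2/ρ−2. -/

import Mathlib

open scoped InnerProductSpace

/-- Numerical radius of a bounded operator on a complex Hilbert space. -/
noncomputable def numRad {H : Type*} [NormedAddCommGroup H] [InnerProductSpace ℂ H]
    (T : H →L[ℂ] H) : ℝ :=
  ⨆ z : {z : H // ‖z‖ = 1}, ‖(⟪T z.1, z.1⟫_ℂ : ℂ)‖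

/-- Crawford number. -/
noncomputable def crawford {H : Type*} [NormedAddCommGroup H] [InnerProductSpace ℂ H]
    (T : H →L[ℂ] H) : ℝ :=
  ⨅ z : {z : H // ‖z‖ = 1}, ‖(⟪T z.1, z.1⟫_ℂ : ℂ)‖

/-- The 2×2 block operator matrix `[[A, B], [C, D]]` acting on `H ⊕ H`
(the ℓ² direct sum `WithLp 2 (H × H)`), sending `(x, y)` to `(Ax + By, Cx + Dy)`. -/
noncomputable def blk {H : Type*} [NormedAddCommGroup H] [InnerProductSpace ℂ H]
    (A B C D : H →L[ℂ] H) : WithLp 2 (H × H) →L[ℂ] WithLp 2 (H × H) :=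
  (((WithLp.prodContinuousLinearEquiv 2 ℂ H H).symm.toContinuousLinearMap).comp
    (((A.comp (ContinuousLinearMap.fst ℂ H H) + B.comp (ContinuousLinearMap.snd ℂ H H)).prod
      (C.comp (ContinuousLinearMap.fst ℂ H H) + D.comp (ContinuousLinearMap.snd ℂ H H))))).comp
    ((WithLp.prodContinuousLinearEquiv 2 ℂ H H).toContinuousLinearMap)

/-- The function `Δ_{(ρ,ν)}`: the numerical radius of the block operator
`[[0, αX], [α(1−2ν)X*, β(X+(1−2ν)X*)]]` with `α = √(8/ρ−4)`, `β = 2/ρ−2`. -/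
noncomputable def Delta {H : Type*} [NormedAddCommGroup H] [InnerProductSpace ℂ H]
    [CompleteSpace H] (ρ ν : ℝ) (X : H →L[ℂ] H) : ℝ :=
  numRad (blk 0 (((Real.sqrt (8/ρ - 4) : ℝ) : ℂ) • X)
    (((Real.sqrt (8/ρ - 4) * (1 - 2*ν) : ℝ) : ℂ) • X.adjoint)
    (((2/ρ - 2 : ℝ) : ℂ) • (X + ((1 - 2*ν : ℝ) : ℂ) • X.adjoint)))

section AuxLemmas
set_option linter.unusedSectionVars false
variable {H : Type*} [NormedAddCommGroup H] [InnerProductSpace ℂ H]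

@[simp] lemma blk_apply_fst (A B C D : H →L[ℂ] H) (p : WithLp 2 (H × H)) :
    (blk A B C D p).fst = A p.fst + B p.snd := rfl
@[simp] lemma blk_apply_snd (A B C D : H →L[ℂ] H) (p : WithLp 2 (H × H)) :
    (blk A B C D p).snd = C p.fst + D p.snd := rfl

lemma wlp_ext {p q : WithLp 2 (H × H)} (h1 : p.fst = q.fst) (h2 : p.snd = q.snd) : p = q :=
  WithLp.ofLp_injective 2 (Prod.ext h1 h2)

lemma blk_smul (c : ℂ) (A B C D : H →L[ℂ] H) :
    c • blk A B C D = blk (c • A) (c • B) (c • C) (c • D) := by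
  ext p
  · exact wlp_ext (by simp [smul_add]) (by simp [smul_add])

lemma blk_sub (A B C D A' B' C' D' : H →L[ℂ] H) :
    blk A B C D - blk A' B' C' D' = blk (A - A') (B - B') (C - C') (D - D') := by
  ext p
  · exact wlp_ext (by simp; abel) (by simp; abel)

lemma numRad_nonneg (T : H →L[ℂ] H) : 0 ≤ numRad T :=
  Real.iSup_nonneg fun _ => norm_nonneg _

lemma inner_norm_le (T : H →L[ℂ] H) {z : H} (hz : ‖z‖ = 1) : ‖(⟪T z, z⟫_ℂ : ℂ)‖ ≤ ‖T‖ := by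
  calc ‖(⟪T z, z⟫_ℂ : ℂ)‖ ≤ ‖T z‖ * ‖z‖ := norm_inner_le_norm _ _
    _ ≤ ‖T‖ * ‖z‖ * ‖z‖ := by
        gcongr; exact T.le_opNorm z
    _ = ‖T‖ := by rw [hz]; ring

lemma numRad_bdd (T : H →L[ℂ] H) :
    BddAbove (Set.range fun z : {z : H // ‖z‖ = 1} => ‖(⟪T z.1, z.1⟫_ℂ : ℂ)‖) := by
  refine ⟨‖T‖, ?_⟩
  rintro x ⟨z, rfl⟩
  exact inner_norm_le T z.2

lemma numRad_le_norm (T : H →L[ℂ] H) : numRad T ≤ ‖T‖ :=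
  Real.iSup_le (fun z => inner_norm_le T z.2) (norm_nonneg T)

lemma le_numRad (T : H →L[ℂ] H) (z : {z : H // ‖z‖ = 1}) :
    ‖(⟪T z.1, z.1⟫_ℂ : ℂ)‖ ≤ numRad T :=
  le_ciSup (numRad_bdd T) z

lemma numRad_le_add_norm (A B : H →L[ℂ] H) : numRad A ≤ numRad B + ‖A - B‖ := by
  refine Real.iSup_le (fun z => ?_) (add_nonneg (numRad_nonneg B) (norm_nonneg _))
  have h1 : (⟪A z.1, z.1⟫_ℂ : ℂ) = ⟪B z.1, z.1⟫_ℂ + ⟪(A - B) z.1, z.1⟫_ℂ := by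
    simp [inner_sub_left]
  calc ‖(⟪A z.1, z.1⟫_ℂ : ℂ)‖ ≤ ‖(⟪B z.1, z.1⟫_ℂ : ℂ)‖ + ‖(⟪(A - B) z.1, z.1⟫_ℂ : ℂ)‖ := by
        rw [h1]; exact norm_add_le _ _
    _ ≤ numRad B + ‖A - B‖ := add_le_add (le_numRad B z) (inner_norm_le _ z.2)

lemma abs_numRad_sub_le (A B : H →L[ℂ] H) : |numRad A - numRad B| ≤ ‖A - B‖ := by
  rw [abs_sub_le_iff]
  constructor
  · linarith [numRad_le_add_norm A B]
  · have := numRad_le_add_norm B A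
    rw [show B - A = -(A - B) by abel, norm_neg] at this
    linarith

lemma numRad_smul_real (c : ℝ) (hc : 0 ≤ c) (T : H →L[ℂ] H) :
    numRad ((c : ℂ) • T) = c * numRad T := by
  unfold numRad
  rw [Real.mul_iSup_of_nonneg hc]
  congr 1; funext z
  rw [ContinuousLinearMap.smul_apply, inner_smul_left]
  simp [norm_mul, abs_of_nonneg hc]

lemma numRad_blk_diag (S : H →L[ℂ] H) : numRad (blk 0 0 0 S) = numRad S := by
  have hval : ∀ p : WithLp 2 (H × H), (⟪blk 0 0 0 S p, p⟫_ℂ : ℂ) = ⟪S p.snd, p.snd⟫_ℂ := by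
    intro p
    rw [WithLp.prod_inner_apply]
    simp
  refine le_antisymm ?_ ?_
  · refine Real.iSup_le (fun p => ?_) (numRad_nonneg S)
    rw [hval p.1]
    set y := p.1.snd with hy
    have hylen : ‖y‖ ≤ 1 := by
      have h2 : ‖y‖ ^ 2 ≤ ‖p.1‖ ^ 2 := by
        rw [WithLp.prod_norm_sq_eq_of_L2]
        exact le_add_of_nonneg_left (by positivity)
      rw [p.2] at h2
      nlinarith [norm_nonneg y]
    rcases eq_or_ne y 0 with h0 | h0
    · simp [h0, numRad_nonneg S]
    · set u : H := ((‖y‖⁻¹ : ℝ) : ℂ) • y with hu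
      have hnz : (‖y‖ : ℝ) ≠ 0 := norm_ne_zero_iff.mpr h0
      have hun : ‖u‖ = 1 := by
        rw [hu, norm_smul]
        simp [hnz, abs_of_nonneg (norm_nonneg y)]
      have hyu : y = ((‖y‖ : ℝ) : ℂ) • u := by
        rw [hu, smul_smul]
        norm_cast
        rw [mul_inv_cancel₀ hnz]
        norm_num
      have hkey : (⟪S y, y⟫_ℂ : ℂ) = ((‖y‖ : ℝ) : ℂ)^2 * ⟪S u, u⟫_ℂ := by
        conv_lhs => rw [hyu]
        rw [map_smul, inner_smul_left, inner_smul_right, Complex.conj_ofReal]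
        ring
      rw [hkey]
      calc ‖(((‖y‖ : ℝ) : ℂ)^2 * ⟪S u, u⟫_ℂ : ℂ)‖ = ‖y‖^2 * ‖(⟪S u, u⟫_ℂ : ℂ)‖ := by
            rw [norm_mul, norm_pow, Complex.norm_real, Real.norm_eq_abs,
              abs_of_nonneg (norm_nonneg y)]
        _ ≤ 1 * numRad S := by
            apply mul_le_mul (by nlinarith [norm_nonneg y]) (le_numRad S ⟨u, hun⟩)
              (norm_nonneg _) zero_le_one
        _ = numRad S := one_mul _
  · refine Real.iSup_le (fun z => ?_) (numRad_nonneg _)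
    set p : WithLp 2 (H × H) := WithLp.toLp 2 ((0 : H), z.1) with hp
    have hpn : ‖p‖ = 1 := by
      rw [WithLp.prod_norm_eq_of_L2]
      have h1 : (p.fst : H) = 0 := rfl
      have h2 : (p.snd : H) = z.1 := rfl
      simp [h1, h2, z.2]
    have := le_numRad (blk 0 0 0 S) ⟨p, hpn⟩
    rwa [hval p] at this

lemma wlp_norm_fst_le (p : WithLp 2 (H × H)) : ‖p.fst‖ ≤ ‖p‖ := by
  have h2 : ‖p.fst‖ ^ 2 ≤ ‖p‖ ^ 2 := by
    rw [WithLp.prod_norm_sq_eq_of_L2]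
    exact le_add_of_nonneg_right (by positivity)
  calc ‖p.fst‖ = Real.sqrt (‖p.fst‖^2) := (Real.sqrt_sq (norm_nonneg _)).symm
    _ ≤ Real.sqrt (‖p‖^2) := Real.sqrt_le_sqrt h2
    _ = ‖p‖ := Real.sqrt_sq (norm_nonneg _)

lemma wlp_norm_snd_le (p : WithLp 2 (H × H)) : ‖p.snd‖ ≤ ‖p‖ := by
  have h2 : ‖p.snd‖ ^ 2 ≤ ‖p‖ ^ 2 := by
    rw [WithLp.prod_norm_sq_eq_of_L2]
    exact le_add_of_nonneg_left (by positivity)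
  calc ‖p.snd‖ = Real.sqrt (‖p.snd‖^2) := (Real.sqrt_sq (norm_nonneg _)).symm
    _ ≤ Real.sqrt (‖p‖^2) := Real.sqrt_le_sqrt h2
    _ = ‖p‖ := Real.sqrt_sq (norm_nonneg _)

lemma blk_norm_le (A B C D : H →L[ℂ] H) : ‖blk A B C D‖ ≤ ‖A‖ + ‖B‖ + ‖C‖ + ‖D‖ := by
  refine ContinuousLinearMap.opNorm_le_bound _ (by positivity) (fun p => ?_)
  have h1 : ‖(blk A B C D p).fst‖ ≤ (‖A‖ + ‖B‖) * ‖p‖ := by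
    rw [blk_apply_fst]
    calc ‖A p.fst + B p.snd‖ ≤ ‖A p.fst‖ + ‖B p.snd‖ := norm_add_le _ _
      _ ≤ ‖A‖ * ‖p‖ + ‖B‖ * ‖p‖ := add_le_add
          ((A.le_opNorm _).trans (by gcongr; exact wlp_norm_fst_le p))
          ((B.le_opNorm _).trans (by gcongr; exact wlp_norm_snd_le p))
      _ = (‖A‖ + ‖B‖) * ‖p‖ := by ring
  have h2 : ‖(blk A B C D p).snd‖ ≤ (‖C‖ + ‖D‖) * ‖p‖ := by
    rw [blk_apply_snd]
    calc ‖C p.fst + D p.snd‖ ≤ ‖C p.fst‖ + ‖D p.snd‖ := norm_add_le _ _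
      _ ≤ ‖C‖ * ‖p‖ + ‖D‖ * ‖p‖ := add_le_add
          ((C.le_opNorm _).trans (by gcongr; exact wlp_norm_fst_le p))
          ((D.le_opNorm _).trans (by gcongr; exact wlp_norm_snd_le p))
      _ = (‖C‖ + ‖D‖) * ‖p‖ := by ring
  rw [WithLp.prod_norm_eq_of_L2]
  calc Real.sqrt (‖(blk A B C D p).fst‖^2 + ‖(blk A B C D p).snd‖^2)
      ≤ Real.sqrt ((‖(blk A B C D p).fst‖ + ‖(blk A B C D p).snd‖)^2) := by
        apply Real.sqrt_le_sqrt; nlinarith [norm_nonneg (blk A B C D p).fst,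
          norm_nonneg (blk A B C D p).snd]
    _ = ‖(blk A B C D p).fst‖ + ‖(blk A B C D p).snd‖ := Real.sqrt_sq (by positivity)
    _ ≤ (‖A‖ + ‖B‖) * ‖p‖ + (‖C‖ + ‖D‖) * ‖p‖ := add_le_add h1 h2
    _ = (‖A‖ + ‖B‖ + ‖C‖ + ‖D‖) * ‖p‖ := by ring

end AuxLemmas

set_option maxHeartbeats 1000000 in
theorem Delta_limit_rho_zero {H : Type*} [NormedAddCommGroup H] [InnerProductSpace ℂ H]
    [CompleteSpace H] {ν : ℝ} (hν : ν ∈ Set.Icc (0 : ℝ) 1) (X : H →L[ℂ] H) :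
    Filter.Tendsto (fun ρ : ℝ => ρ * Delta ρ ν X) (nhdsWithin 0 (Set.Ioi 0))
      (nhds (2 * numRad (X + ((1 - 2*ν : ℝ) : ℂ) • X.adjoint))) := by
  set Y := X + ((1 - 2*ν : ℝ) : ℂ) • X.adjoint with hY
  set L : WithLp 2 (H × H) →L[ℂ] WithLp 2 (H × H) := blk 0 0 0 (((2:ℝ):ℂ) • Y) with hL
  have hLval : numRad L = 2 * numRad Y := by
    rw [hL, numRad_blk_diag, numRad_smul_real 2 (by norm_num)]
  have key : ∀ ρ : ℝ, ρ ∈ Set.Ioi (0:ℝ) →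
      |ρ * Delta ρ ν X - 2 * numRad Y| ≤
        |ρ * Real.sqrt (8/ρ - 4)| * ‖X‖
        + |ρ * (Real.sqrt (8/ρ - 4) * (1 - 2*ν))| * ‖X.adjoint‖
        + |ρ * (2/ρ - 2) - 2| * ‖Y‖ := by
    intro ρ hρ
    have hρ0 : (0:ℝ) ≤ ρ := le_of_lt hρ
    set c1 := ρ * Real.sqrt (8/ρ - 4) with hc1
    set c2 := ρ * (Real.sqrt (8/ρ - 4) * (1 - 2*ν)) with hc2
    set c3 := ρ * (2/ρ - 2) with hc3
    have h1 : ρ * Delta ρ ν X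
        = numRad (blk 0 ((c1:ℂ) • X) ((c2:ℂ) • X.adjoint) ((c3:ℂ) • Y)) := by
      rw [Delta, ← numRad_smul_real ρ hρ0]
      congr 1
      simp only [blk_smul, smul_zero, smul_smul, ← Complex.ofReal_mul, ← hY]
      rfl
    have hdiff : blk 0 ((c1:ℂ) • X) ((c2:ℂ) • X.adjoint) ((c3:ℂ) • Y) - L
        = blk 0 ((c1:ℂ) • X) ((c2:ℂ) • X.adjoint) (((c3 - 2 : ℝ):ℂ) • Y) := by
      rw [hL, blk_sub]
      congr 1
      · simp
      · simp
      · simp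
      · push_cast
        rw [sub_smul]
    have hb := abs_numRad_sub_le (blk 0 ((c1:ℂ) • X) ((c2:ℂ) • X.adjoint) ((c3:ℂ) • Y)) L
    rw [hdiff] at hb
    have hnorm : ‖blk 0 ((c1:ℂ) • X) ((c2:ℂ) • X.adjoint) (((c3 - 2 : ℝ):ℂ) • Y)‖
        ≤ |c1| * ‖X‖ + |c2| * ‖X.adjoint‖ + |c3 - 2| * ‖Y‖ := by
      have := blk_norm_le (0 : H →L[ℂ] H) ((c1:ℂ) • X) ((c2:ℂ) • X.adjoint)
        (((c3 - 2 : ℝ):ℂ) • Y)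
      refine this.trans (le_of_eq ?_)
      rw [norm_zero, norm_smul, norm_smul, norm_smul, Complex.norm_real, Complex.norm_real,
        Complex.norm_real, Real.norm_eq_abs, Real.norm_eq_abs, Real.norm_eq_abs]
      ring
    rw [h1, ← hLval]
    exact hb.trans hnorm
  -- tendsto of the bounding function
  have heq1 : ∀ ρ ∈ Set.Ioi (0:ℝ), |ρ * Real.sqrt (8/ρ - 4)| = Real.sqrt (8*ρ - 4*ρ^2) := by
    intro ρ hρ
    have hρ' : (0:ℝ) < ρ := hρ
    have : ρ * Real.sqrt (8/ρ - 4) = Real.sqrt (8*ρ - 4*ρ^2) := by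
      rw [show ρ = Real.sqrt (ρ^2) from (Real.sqrt_sq hρ'.le).symm]
      rw [← Real.sqrt_mul (sq_nonneg ρ), Real.sqrt_sq hρ'.le]
      congr 1
      field_simp
    rw [this, abs_of_nonneg (Real.sqrt_nonneg _)]
  have t1 : Filter.Tendsto (fun ρ : ℝ => |ρ * Real.sqrt (8/ρ - 4)|)
      (nhdsWithin 0 (Set.Ioi 0)) (nhds 0) := by
    have tc : Filter.Tendsto (fun ρ : ℝ => Real.sqrt (8*ρ - 4*ρ^2))
        (nhdsWithin 0 (Set.Ioi 0)) (nhds 0) := by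
      have : Continuous fun ρ : ℝ => Real.sqrt (8*ρ - 4*ρ^2) :=
        Real.continuous_sqrt.comp ((continuous_const.mul continuous_id').sub
          (continuous_const.mul (continuous_pow 2)))
      have := this.tendsto 0
      simp only [mul_zero, zero_pow, ne_eq, OfNat.ofNat_ne_zero, not_false_eq_true,
        sub_zero, Real.sqrt_zero] at this
      exact this.mono_left nhdsWithin_le_nhds
    refine tc.congr' ?_
    filter_upwards [self_mem_nhdsWithin] with ρ hρ
    exact (heq1 ρ hρ).symm
  have t2 : Filter.Tendsto (fun ρ : ℝ => |ρ * (Real.sqrt (8/ρ - 4) * (1 - 2*ν))|)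
      (nhdsWithin 0 (Set.Ioi 0)) (nhds 0) := by
    have : (fun ρ : ℝ => |ρ * (Real.sqrt (8/ρ - 4) * (1 - 2*ν))|)
        = fun ρ : ℝ => |ρ * Real.sqrt (8/ρ - 4)| * |1 - 2*ν| := by
      funext ρ; rw [← abs_mul]; ring_nf
    rw [this]
    simpa using t1.mul_const |1 - 2*ν|
  have t3 : Filter.Tendsto (fun ρ : ℝ => |ρ * (2/ρ - 2) - 2|)
      (nhdsWithin 0 (Set.Ioi 0)) (nhds 0) := by
    have tc : Filter.Tendsto (fun ρ : ℝ => |(-2 : ℝ) * ρ|)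
        (nhdsWithin 0 (Set.Ioi 0)) (nhds 0) := by
      have : Continuous fun ρ : ℝ => |(-2 : ℝ) * ρ| :=
        (continuous_const.mul continuous_id').abs
      have := this.tendsto 0
      simp only [mul_zero, abs_zero] at this
      exact this.mono_left nhdsWithin_le_nhds
    refine tc.congr' ?_
    filter_upwards [self_mem_nhdsWithin] with ρ hρ
    have hρ' : (ρ:ℝ) ≠ 0 := ne_of_gt hρ
    congr 1
    field_simp
    ring
  have tg : Filter.Tendsto (fun ρ : ℝ =>
        |ρ * Real.sqrt (8/ρ - 4)| * ‖X‖
        + |ρ * (Real.sqrt (8/ρ - 4) * (1 - 2*ν))| * ‖X.adjoint‖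
        + |ρ * (2/ρ - 2) - 2| * ‖Y‖)
      (nhdsWithin 0 (Set.Ioi 0)) (nhds 0) := by
    have := ((t1.mul_const ‖X‖).add (t2.mul_const ‖X.adjoint‖)).add (t3.mul_const ‖Y‖)
    simpa using this
  have tsub : Filter.Tendsto (fun ρ : ℝ => ρ * Delta ρ ν X - 2 * numRad Y)
      (nhdsWithin 0 (Set.Ioi 0)) (nhds 0) := by
    refine squeeze_zero_norm' ?_ tg
    filter_upwards [self_mem_nhdsWithin] with ρ hρ
    rw [Real.norm_eq_abs]
    exact key ρ hρ
  have := tsub.add_const (2 * numRad Y)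
  simpa using this
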